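/- Let A be a commutative F_p-algebra with no idempotents other than 0 and 1, and let q = p^n with n ≥ 1. Suppose every element a ∈ A satisfies a^q = a. Then A is a finite field, and its cardinality is p^d for some d dividing n. -/

import Mathlib

lemma aux_dvd_of_pow_sub_one_dvd {p d n : ℕ} (hp : 2 ≤ p) (hd : 0 < d)
    (h : p ^ d - 1 ∣ p ^ n - 1) : d ∣ n := by
  have hr : n % d < d := Nat.mod_lt _ hd
  have hkey : p ^ d - 1 ∣ p ^ (n % d) - 1 := by
    have h1 : p ^ d - 1 ∣ p ^ (d * (n / d)) - 1 :=
      by simpa only [one_pow, pow_mul] using Nat.sub_dvd_pow_sub_pow (p ^ d) 1 (n / d)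
    have hpow : p ^ n = p ^ (n % d) * p ^ (d * (n / d)) := by
      rw [← pow_add, Nat.mod_add_div]
    have h2 : p ^ d - 1 ∣ p ^ n - p ^ (n % d) := by
      have : p ^ n - p ^ (n % d) = p ^ (n % d) * (p ^ (d * (n / d)) - 1) := by
        rw [Nat.mul_sub, mul_one, ← hpow]
      rw [this]
      exact Dvd.dvd.mul_left h1 _
    have h3 : p ^ n - 1 - (p ^ n - p ^ (n % d)) = p ^ (n % d) - 1 := by
      have h4 : 1 ≤ p ^ (n % d) := Nat.one_le_pow _ _ (by omega)
      have h5 : p ^ (n % d) ≤ p ^ n := Nat.pow_le_pow_right (by omega) (Nat.mod_le n d)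
      omega
    calc p ^ d - 1 ∣ p ^ n - 1 - (p ^ n - p ^ (n % d)) := Nat.dvd_sub h h2
      _ = p ^ (n % d) - 1 := h3
  have hlt : p ^ (n % d) - 1 < p ^ d - 1 := by
    have := Nat.pow_lt_pow_right (by omega : 1 < p) hr
    have := Nat.one_le_pow (n % d) p (by omega)
    omega
  have hz : p ^ (n % d) - 1 = 0 := Nat.eq_zero_of_dvd_of_lt hkey hlt |>.symm ▸ rfl
  have : p ^ (n % d) = 1 := by
    have := Nat.one_le_pow (n % d) p (by omega)
    omega
  have : n % d = 0 := by
    by_contra hne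
    have : p ^ (n % d) ≥ p ^ 1 := Nat.pow_le_pow_right (by omega) (by omega)
    simp at this
    omega
  exact Nat.dvd_of_mod_eq_zero this

theorem finite_field_of_pow_q_eq_self (p n : ℕ) [Fact p.Prime] (hn : 1 ≤ n)
    (A : Type*) [CommRing A] [CharP A p]
    (hidem : ∀ e : A, e * e = e → e = 0 ∨ e = 1)
    (hq : ∀ a : A, a ^ (p ^ n) = a) :
    IsField A ∧ Finite A ∧ ∃ d : ℕ, d ∣ n ∧ Nat.card A = p ^ d := by
  have hp : p.Prime := Fact.out
  haveI : Nontrivial A := CharP.nontrivial_of_char_ne_one hp.ne_one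
  set q := p ^ n with hqdef
  have hq2 : 2 ≤ q := by
    calc 2 ≤ p := hp.two_le
    _ = p ^ 1 := (pow_one p).symm
    _ ≤ p ^ n := Nat.pow_le_pow_right hp.one_lt.le hn
  -- Step 1: A is a field
  have hfield : IsField A := by
    refine ⟨exists_pair_ne A, mul_comm, ?_⟩
    intro a ha
    have he : a ^ (q - 1) * a ^ (q - 1) = a ^ (q - 1) := by
      rw [← pow_add]
      have : q - 1 + (q - 1) = q + (q - 2) := by omega
      rw [this, pow_add, hq a, ← pow_succ']
      congr 1
      omega
    rcases hidem _ he with h0 | h1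
    · exfalso
      apply ha
      calc a = a ^ q := (hq a).symm
        _ = a * a ^ (q - 1) := by rw [← pow_succ']; congr 1; omega
        _ = a * 0 := by rw [h0]
        _ = 0 := mul_zero a
    · refine ⟨a ^ (q - 2), ?_⟩
      calc a * a ^ (q - 2) = a ^ (q - 1) := by rw [← pow_succ']; congr 1; omega
        _ = 1 := h1
  letI : Field A := hfield.toField
  -- Step 2: A is finite
  have hfin : Finite A := by
    set P : Polynomial A := Polynomial.X ^ q - Polynomial.X with hP
    have hPne : P ≠ 0 := by
      intro h
      have := congrArg (Polynomial.coeff · q) h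
      simp only [hP, Polynomial.coeff_sub, Polynomial.coeff_X_pow, if_pos rfl,
        Polynomial.coeff_X, if_neg (by omega : ¬ (1 = q)), Polynomial.coeff_zero] at this
      rw [sub_zero] at this
      exact one_ne_zero this
    have hroots : Set.Finite {x : A | P.IsRoot x} := Polynomial.finite_setOf_isRoot hPne
    have huniv : (Set.univ : Set A) = {x : A | P.IsRoot x} := by
      ext x
      simp [hP, Polynomial.IsRoot, hq x]
    rw [← Set.finite_univ_iff]
    rw [huniv]
    exact hroots
  haveI : Finite A := hfin
  haveI : Fintype A := Fintype.ofFinite A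
  -- Step 3: cardinality
  obtain ⟨d, -, hcard⟩ := FiniteField.card A p
  refine ⟨hfield, hfin, d, ?_, by rw [Nat.card_eq_fintype_card, hcard]⟩
  -- show d ∣ n via p^d - 1 ∣ p^n - 1
  haveI : DecidableEq A := Classical.decEq A
  obtain ⟨g, hg⟩ := IsCyclic.exists_generator (α := Aˣ)
  have horder : orderOf g = p ^ (d : ℕ) - 1 := by
    rw [orderOf_eq_card_of_forall_mem_zpowers hg, Nat.card_units, Nat.card_eq_fintype_card, hcard]
  have hg1 : g ^ (q - 1) = 1 := by
    have h1 : g ^ q = g := by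
      ext
      push_cast
      exact hq (g : A)
    have h2 : g ^ (q - 1) * g = g := by
      rw [← pow_succ]
      have : q - 1 + 1 = q := by omega
      rw [this, h1]
    calc g ^ (q - 1) = g ^ (q - 1) * g * g⁻¹ := by group
      _ = g * g⁻¹ := by rw [h2]
      _ = 1 := mul_inv_cancel g
  have hdvd : p ^ (d : ℕ) - 1 ∣ q - 1 := by
    rw [← horder]
    exact orderOf_dvd_of_pow_eq_one hg1
  exact aux_dvd_of_pow_sub_one_dvd hp.two_le d.pos hdvd
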